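/- In the Advantage Process with $b$ balls run for $r$ rounds, let $a_i^* = a_{r,i}$. If $|i| > \sqrt{2r \ln b}$ then $a_i^* = 0$. -/

import Mathlib

/-- The Advantage Process with `b` balls: `adv b j i` is the number of balls in box `i`
after round `j`. Initially all `b` balls are in box `0`; in each round every box sends
half (rounded down) of its balls to each neighbouring box, keeping one ball if its
count is odd. -/
def adv (b : ℕ) : ℕ → ℤ → ℕ
  | 0, i => if i = 0 then b else 0
  | j + 1, i => adv b j (i - 1) / 2 + adv b j (i + 1) / 2 + adv b j i % 2

open Real

/-- Balls spread at most one box per round. -/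
lemma adv_far_zero (b : ℕ) : ∀ (j : ℕ) (i : ℤ), (j : ℤ) < |i| → adv b j i = 0
  | 0, i, h => by
      have hi : i ≠ 0 := by rintro rfl; simp at h
      simp [adv, hi]
  | j + 1, i, h => by
      have h1 : (j : ℤ) < |i - 1| := by rw [lt_abs] at h ⊢; push_cast at h ⊢; omega
      have h2 : (j : ℤ) < |i + 1| := by rw [lt_abs] at h ⊢; push_cast at h ⊢; omega
      have h3 : (j : ℤ) < |i| := by rw [lt_abs] at h ⊢; push_cast at h ⊢; omega
      simp [adv, adv_far_zero b j _ h1, adv_far_zero b j _ h2, adv_far_zero b j _ h3]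

lemma summable_of_small_supp (f : ℤ → ℝ) (n : ℤ) (h : ∀ i : ℤ, n < |i| → f i = 0) :
    Summable f := by
  apply summable_of_ne_finset_zero (s := Finset.Icc (-n) n)
  intro i hi
  simp only [Finset.mem_Icc, not_and_or, not_le] at hi
  exact h i (by rw [lt_abs]; omega)

lemma summable_adv (b j : ℕ) (l : ℝ) :
    Summable (fun i : ℤ => (adv b j i : ℝ) * Real.exp (l * i)) := by
  apply summable_of_small_supp _ (j : ℤ)
  intro i hi
  simp [adv_far_zero b j i hi]

/-- One-step Chernoff bound for the exponentially weighted mass. -/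
lemma adv_step (b : ℕ) (l : ℝ) (j : ℕ) :
    ∑' i : ℤ, (adv b (j + 1) i : ℝ) * Real.exp (l * i)
      ≤ Real.cosh l * ∑' i : ℤ, (adv b j i : ℝ) * Real.exp (l * i) := by
  set a : ℤ → ℕ := adv b j with ha
  set E : ℤ → ℝ := fun i => Real.exp (l * i) with hE
  have hEpos : ∀ i, 0 < E i := fun i => Real.exp_pos _
  set F1 : ℤ → ℝ := fun i => (a (i - 1) / 2 : ℕ) * E i with hF1d
  set F2 : ℤ → ℝ := fun i => (a (i + 1) / 2 : ℕ) * E i with hF2d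
  set F3 : ℤ → ℝ := fun i => (a i % 2 : ℕ) * E i with hF3d
  set H1 : ℤ → ℝ := fun i => (a i / 2 : ℕ) * E (i + 1) with hH1d
  set H2 : ℤ → ℝ := fun i => (a i / 2 : ℕ) * E (i - 1) with hH2d
  have hz : ∀ i : ℤ, (j : ℤ) < |i| → a i = 0 := fun i hi => adv_far_zero b j i hi
  have hzb : ∀ i : ℤ, (j : ℤ) + 1 < |i| → a (i - 1) = 0 ∧ a (i + 1) = 0 ∧ a i = 0 := by
    intro i hi
    refine ⟨hz _ ?_, hz _ ?_, hz _ ?_⟩ <;> (rw [lt_abs] at hi ⊢; omega)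
  have hF1 : Summable F1 := summable_of_small_supp _ ((j : ℤ) + 1)
    (fun i hi => by simp [hF1d, (hzb i hi).1])
  have hF2 : Summable F2 := summable_of_small_supp _ ((j : ℤ) + 1)
    (fun i hi => by simp [hF2d, (hzb i hi).2.1])
  have hF3 : Summable F3 := summable_of_small_supp _ ((j : ℤ) + 1)
    (fun i hi => by simp [hF3d, (hzb i hi).2.2])
  have hH1 : Summable H1 := summable_of_small_supp _ (j : ℤ)
    (fun i hi => by simp [hH1d, hz i hi])
  have hH2 : Summable H2 := summable_of_small_supp _ (j : ℤ)
    (fun i hi => by simp [hH2d, hz i hi])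
  have expand : ∀ i : ℤ, (adv b (j + 1) i : ℝ) * E i = F1 i + F2 i + F3 i := by
    intro i
    have : adv b (j + 1) i = a (i - 1) / 2 + a (i + 1) / 2 + a i % 2 := rfl
    rw [this]; push_cast; ring
  have e1 : ∑' i, F1 i = ∑' i, H1 i := by
    rw [← (Equiv.subRight (1 : ℤ)).tsum_eq H1]
    refine tsum_congr fun i => ?_
    simp only [hF1d, hH1d, Equiv.subRight_apply, sub_add_cancel]
  have e2 : ∑' i, F2 i = ∑' i, H2 i := by
    rw [← (Equiv.addRight (1 : ℤ)).tsum_eq H2]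
    refine tsum_congr fun i => ?_
    simp only [hF2d, hH2d, Equiv.coe_addRight, add_sub_cancel_right]
  have pointwise : ∀ i : ℤ, H1 i + H2 i + F3 i ≤ Real.cosh l * ((a i : ℝ) * E i) := by
    intro i
    have hE1 : E (i + 1) = E i * Real.exp l := by
      simp only [hE]; push_cast
      rw [show l * ((i : ℝ) + 1) = l * i + l by ring, Real.exp_add]
    have hE2 : E (i - 1) = E i * Real.exp (-l) := by
      simp only [hE]; push_cast
      rw [show l * ((i : ℝ) - 1) = l * i + (-l) by ring, Real.exp_add]
    have hcosh : Real.exp l + Real.exp (-l) = 2 * Real.cosh l := by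
      rw [Real.cosh_eq]; ring
    have hmod : 2 * ((a i / 2 : ℕ) : ℝ) + ((a i % 2 : ℕ) : ℝ) = (a i : ℝ) := by
      exact_mod_cast congrArg (Nat.cast : ℕ → ℝ) (Nat.div_add_mod (a i) 2)
    have hc1 : (1 : ℝ) ≤ Real.cosh l := Real.one_le_cosh l
    have hm0 : (0 : ℝ) ≤ ((a i % 2 : ℕ) : ℝ) := Nat.cast_nonneg _
    have hEi := (hEpos i).le
    simp only [hH1d, hH2d, hF3d, hE1, hE2]
    rw [← hmod]
    have h4 : ((a i / 2 : ℕ) : ℝ) * E i * (Real.exp l + Real.exp (-l))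
        = ((a i / 2 : ℕ) : ℝ) * E i * (2 * Real.cosh l) := by rw [hcosh]
    nlinarith [h4, mul_nonneg (mul_nonneg hm0 hEi) (sub_nonneg.mpr hc1)]
  calc ∑' i, (adv b (j + 1) i : ℝ) * E i
      = ∑' i, (F1 i + F2 i + F3 i) := tsum_congr expand
    _ = (∑' i, F1 i + ∑' i, F2 i) + ∑' i, F3 i := by
        rw [Summable.tsum_add (hF1.add hF2) hF3, Summable.tsum_add hF1 hF2]
    _ = (∑' i, H1 i + ∑' i, H2 i) + ∑' i, F3 i := by rw [e1, e2]
    _ = ∑' i, (H1 i + H2 i + F3 i) := by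
        rw [Summable.tsum_add (hH1.add hH2) hF3, Summable.tsum_add hH1 hH2]
    _ ≤ ∑' i, Real.cosh l * ((a i : ℝ) * E i) :=
        Summable.tsum_le_tsum pointwise ((hH1.add hH2).add hF3)
          ((summable_adv b j l).mul_left _)
    _ = Real.cosh l * ∑' i, (a i : ℝ) * E i := tsum_mul_left

lemma adv_phi_le (b : ℕ) (l : ℝ) : ∀ j : ℕ,
    ∑' i : ℤ, (adv b j i : ℝ) * Real.exp (l * i) ≤ b * Real.cosh l ^ j
  | 0 => by
      have : ∑' i : ℤ, (adv b 0 i : ℝ) * Real.exp (l * i) = b := by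
        rw [tsum_eq_single (0 : ℤ)]
        · simp [adv]
        · intro i hi; simp [adv, hi]
      rw [this]; simp
  | j + 1 => by
      calc ∑' i : ℤ, (adv b (j + 1) i : ℝ) * Real.exp (l * i)
          ≤ Real.cosh l * ∑' i : ℤ, (adv b j i : ℝ) * Real.exp (l * i) := adv_step b l j
        _ ≤ Real.cosh l * (b * Real.cosh l ^ j) :=
            mul_le_mul_of_nonneg_left (adv_phi_le b l j) (Real.cosh_pos l).le
        _ = b * Real.cosh l ^ (j + 1) := by ring

lemma adv_le (b j : ℕ) (l : ℝ) (i : ℤ) :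
    (adv b j i : ℝ) * Real.exp (l * i) ≤ b * Real.cosh l ^ j := by
  refine le_trans (Summable.le_tsum (summable_adv b j l) i fun k _ => ?_) (adv_phi_le b l j)
  positivity

/-- After `r` rounds of the Advantage Process with `b` balls, every box at distance
more than `√(2 r ln b)` from the origin is empty. -/
theorem stmt6 (b r : ℕ) (i : ℤ)
    (hi : Real.sqrt (2 * r * Real.log b) < |(i : ℝ)|) : adv b r i = 0 := by
  -- degenerate cases
  rcases Nat.eq_zero_or_pos b with hb | hb
  · subst hb
    have h0 : ∀ j (k : ℤ), adv 0 j k = 0 := by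
      intro j
      induction j with
      | zero => intro k; simp [adv]
      | succ j ih => intro k; simp [adv, ih]
    exact h0 r i
  rcases Nat.eq_zero_or_pos r with hr | hr
  · subst hr
    have hne : i ≠ 0 := by
      rintro rfl
      simp only [Int.cast_zero, abs_zero] at hi
      exact absurd hi (not_lt.mpr (Real.sqrt_nonneg _))
    simp [adv, hne]
  -- main case
  have hb1 : (1 : ℝ) ≤ b := by exact_mod_cast hb
  have hbpos : (0 : ℝ) < b := by linarith
  have hR : (0 : ℝ) < r := by exact_mod_cast hr
  have hlog : 0 ≤ Real.log b := Real.log_nonneg hb1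
  have harg : 0 ≤ 2 * (r : ℝ) * Real.log b := by positivity
  have hsq : 2 * (r : ℝ) * Real.log b < (i : ℝ) ^ 2 := by
    nlinarith [Real.sq_sqrt harg, Real.sqrt_nonneg (2 * (r : ℝ) * Real.log b),
      sq_abs ((i : ℝ)), abs_nonneg ((i : ℝ))]
  set S : ℝ := (i : ℝ) ^ 2 with hS
  have hS0 : 0 ≤ S := sq_nonneg _
  set l : ℝ := (i : ℝ) / r with hl
  have key := adv_le b r l i
  have hli : l * (i : ℝ) = S / r := by rw [hl, hS]; ring
  have hch : Real.cosh l ^ r ≤ Real.exp (S / (2 * r)) := by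
    calc Real.cosh l ^ r ≤ Real.exp (l ^ 2 / 2) ^ r :=
          pow_le_pow_left₀ (Real.cosh_pos l).le (Real.cosh_le_exp_half_sq l) r
      _ = Real.exp (r * (l ^ 2 / 2)) := (Real.exp_nat_mul _ r).symm
      _ = Real.exp (S / (2 * r)) := by
          congr 1; rw [hl, hS]; field_simp
  rw [hli] at key
  have h1 : (adv b r i : ℝ) * Real.exp (S / r) ≤ b * Real.exp (S / (2 * r)) :=
    key.trans (mul_le_mul_of_nonneg_left hch hbpos.le)
  have h2 : (adv b r i : ℝ) ≤ b * Real.exp (S / (2 * r)) / Real.exp (S / r) :=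
    (le_div_iff₀ (Real.exp_pos _)).mpr h1
  have h3 : b * Real.exp (S / (2 * r)) / Real.exp (S / r) = b * Real.exp (-(S / (2 * r))) := by
    rw [mul_div_assoc, ← Real.exp_sub]; congr 1; field_simp; ring
  have hlt : Real.exp (-(S / (2 * r))) < Real.exp (-Real.log b) := by
    apply Real.exp_lt_exp.mpr
    have hlb : Real.log b < S / (2 * r) := by
      rw [lt_div_iff₀ (by positivity)]; nlinarith
    linarith
  have hfin : (adv b r i : ℝ) < 1 := by
    calc (adv b r i : ℝ) ≤ b * Real.exp (-(S / (2 * r))) := h3 ▸ h2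
      _ < b * Real.exp (-Real.log b) := mul_lt_mul_of_pos_left hlt hbpos
      _ = 1 := by rw [Real.exp_neg, Real.exp_log hbpos]; field_simp
  have : adv b r i < 1 := by exact_mod_cast hfin
  omega
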